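/- Let p ∈ (1,2), μ > 0, and let D, E be symmetric-matrix-valued functions in L²(Ω) with Ω of finite measure. Then ∫_Ω |E|² (μ + |D(x)|²)^{(p−2)/2} dx ≥ ‖E‖²_{L^{4/(4−p)}(Ω)} / (μ|Ω| + ‖D‖²_{L²(Ω)})^{(2−p)/2}. -/

import Mathlib

open MeasureTheory Finset

/-- Reverse-Hölder lower bound for the degenerate elliptic form: for `p ∈ (1,2)`,
`μ > 0`, symmetric-matrix-valued `D, E ∈ L²(Ω)`,
`∫_Ω |E|²(μ+|D|²)^{(p-2)/2} ≥ ‖E‖²_{L^{4/(4-p)}} / (μ|Ω| + ‖D‖²_{L²})^{(2-p)/2}`. -/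
theorem reverse_holder_application
    (p μ : ℝ) (hp1 : 1 < p) (hp2 : p < 2) (hμ : 0 < μ)
    (Ω : Set (EuclideanSpace ℝ (Fin 3))) (hΩ : volume Ω < ⊤)
    (D E : EuclideanSpace ℝ (Fin 3) → Matrix (Fin 3) (Fin 3) ℝ)
    (hD : ∀ i j, Measurable fun x => D x i j)
    (hE : ∀ i j, Measurable fun x => E x i j)
    (hDs : ∀ x, (D x).IsSymm) (hEs : ∀ x, (E x).IsSymm)
    (nsq : Matrix (Fin 3) (Fin 3) ℝ → ℝ)
    (hnsq : nsq = fun M => ∑ i, ∑ j, (M i j) ^ 2)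
    (hD2 : IntegrableOn (fun x => nsq (D x)) Ω volume)
    (hE2 : IntegrableOn (fun x => nsq (E x)) Ω volume)
    (hE4 : IntegrableOn (fun x => Real.sqrt (nsq (E x)) ^ (4 / (4 - p))) Ω volume)
    (hEw : IntegrableOn (fun x => nsq (E x) * (μ + nsq (D x)) ^ ((p - 2) / 2)) Ω volume) :
    (∫ x in Ω, nsq (E x) * (μ + nsq (D x)) ^ ((p - 2) / 2)) ≥
      (∫ x in Ω, Real.sqrt (nsq (E x)) ^ (4 / (4 - p))) ^ ((4 - p) / 2) /
        (μ * (volume Ω).toReal + ∫ x in Ω, nsq (D x)) ^ ((2 - p) / 2) := by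
  have h4p : (0:ℝ) < 4 - p := by linarith
  have h2p : (0:ℝ) < 2 - p := by linarith
  have h4 : (4:ℝ) - p ≠ 0 := ne_of_gt h4p
  have h2 : (2:ℝ) - p ≠ 0 := ne_of_gt h2p
  set ν := volume.restrict Ω with hν
  haveI hfin : IsFiniteMeasure ν := by
    constructor
    rw [hν, Measure.restrict_apply_univ]
    exact hΩ
  -- basic pointwise facts
  have hFnn : ∀ x, 0 ≤ nsq (E x) := by
    intro x; rw [hnsq]; positivity
  have hDnn : ∀ x, 0 ≤ nsq (D x) := by
    intro x; rw [hnsq]; positivity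
  have hGpos : ∀ x, 0 < μ + nsq (D x) := fun x => by have := hDnn x; linarith
  have hFmeas : Measurable fun x => nsq (E x) := by
    rw [hnsq]
    exact Finset.measurable_sum _ fun i _ =>
      Finset.measurable_sum _ fun j _ => (hE i j).pow_const 2
  have hGmeas : Measurable fun x => μ + nsq (D x) := by
    rw [hnsq]
    exact measurable_const.add (Finset.measurable_sum _ fun i _ =>
      Finset.measurable_sum _ fun j _ => (hD i j).pow_const 2)
  have hwmeas : Measurable fun x => (μ + nsq (D x)) ^ ((p - 2) / 2) := by
    have h : (fun x => (μ + nsq (D x)) ^ ((p - 2) / 2)) =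
        fun x => Real.exp (Real.log (μ + nsq (D x)) * ((p - 2) / 2)) :=
      funext fun x => Real.rpow_def_of_pos (hGpos x) _
    rw [h]
    exact Real.measurable_exp.comp ((Real.measurable_log.comp hGmeas).mul_const _)
  have hwpos : ∀ x, 0 < (μ + nsq (D x)) ^ ((p - 2) / 2) :=
    fun x => Real.rpow_pos_of_pos (hGpos x) _
  -- conjugate exponents
  set q : ℝ := (4 - p) / 2 with hqdef
  set q' : ℝ := (4 - p) / (2 - p) with hq'def
  have hq1 : 1 < q := by rw [hqdef, lt_div_iff₀ (by norm_num : (0:ℝ) < 2)]; linarith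
  have hqpos : 0 < q := lt_trans one_pos hq1
  have hq'pos : 0 < q' := div_pos h4p h2p
  have hconj : q.HolderConjugate q' := by
    rw [Real.holderConjugate_iff_eq_conjExponent hq1, hqdef, hq'def]
    rw [show (4 - p) / 2 - 1 = (2 - p) / 2 by ring,
      div_div_div_cancel_right₀ (by norm_num : (2:ℝ) ≠ 0)]
  -- the two Hölder factors
  set f : EuclideanSpace ℝ (Fin 3) → ℝ :=
    fun x => (nsq (E x) * (μ + nsq (D x)) ^ ((p - 2) / 2)) ^ (2 / (4 - p)) with hfdef
  set g : EuclideanSpace ℝ (Fin 3) → ℝ :=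
    fun x => (μ + nsq (D x)) ^ ((2 - p) / (4 - p)) with hgdef
  have hfnn : ∀ x, 0 ≤ f x := fun x => Real.rpow_nonneg
    (mul_nonneg (hFnn x) (hwpos x).le) _
  have hgnn : ∀ x, 0 ≤ g x := fun x => (Real.rpow_pos_of_pos (hGpos x) _).le
  have hfmeas : Measurable f := by
    have hc : Continuous fun y : ℝ => y ^ (2 / (4 - p)) :=
      Real.continuous_rpow_const (by positivity)
    exact hc.measurable.comp (hFmeas.mul hwmeas)
  have hgmeas : Measurable g := by
    have hc : Continuous fun y : ℝ => y ^ ((2 - p) / (4 - p)) :=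
      Real.continuous_rpow_const (by positivity)
    exact hc.measurable.comp hGmeas
  -- pointwise identities
  have hfq : ∀ x, f x ^ q = nsq (E x) * (μ + nsq (D x)) ^ ((p - 2) / 2) := by
    intro x
    simp only [hfdef]
    rw [← Real.rpow_mul (mul_nonneg (hFnn x) (hwpos x).le)]
    rw [show 2 / (4 - p) * q = 1 by rw [hqdef]; field_simp, Real.rpow_one]
  have hgq : ∀ x, g x ^ q' = μ + nsq (D x) := by
    intro x
    simp only [hgdef]
    rw [← Real.rpow_mul (hGpos x).le]
    rw [show (2 - p) / (4 - p) * q' = 1 by rw [hq'def]; field_simp, Real.rpow_one]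
  have hfg : ∀ x, f x * g x = Real.sqrt (nsq (E x)) ^ (4 / (4 - p)) := by
    intro x
    have hL : f x * g x = nsq (E x) ^ (2 / (4 - p)) := by
      simp only [hfdef, hgdef]
      rw [Real.mul_rpow (hFnn x) (hwpos x).le, ← Real.rpow_mul (hGpos x).le, mul_assoc,
        ← Real.rpow_add (hGpos x)]
      rw [show (p - 2) / 2 * (2 / (4 - p)) + (2 - p) / (4 - p) = 0 by field_simp; ring,
        Real.rpow_zero, mul_one]
    have hR : Real.sqrt (nsq (E x)) ^ (4 / (4 - p)) = nsq (E x) ^ (2 / (4 - p)) := by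
      rw [Real.sqrt_eq_rpow, ← Real.rpow_mul (hFnn x)]
      congr 1
      field_simp
      ring
    rw [hL, hR]
  -- Memℒp facts
  have hq0 : ENNReal.ofReal q ≠ 0 := (ENNReal.ofReal_pos.mpr hqpos).ne'
  have hq'0 : ENNReal.ofReal q' ≠ 0 := (ENNReal.ofReal_pos.mpr hq'pos).ne'
  have hmemf : MemLp f (ENNReal.ofReal q) ν := by
    refine (memLp_norm_rpow_iff hfmeas.aestronglyMeasurable hq0 ENNReal.ofReal_ne_top).mp ?_
    rw [ENNReal.div_self hq0 ENNReal.ofReal_ne_top, memLp_one_iff_integrable]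
    have h : (fun x => ‖f x‖ ^ (ENNReal.ofReal q).toReal) =
        fun x => nsq (E x) * (μ + nsq (D x)) ^ ((p - 2) / 2) := by
      funext x
      rw [ENNReal.toReal_ofReal hqpos.le, Real.norm_of_nonneg (hfnn x), hfq x]
    rw [h]
    exact hEw
  have hmemg : MemLp g (ENNReal.ofReal q') ν := by
    refine (memLp_norm_rpow_iff hgmeas.aestronglyMeasurable hq'0 ENNReal.ofReal_ne_top).mp ?_
    rw [ENNReal.div_self hq'0 ENNReal.ofReal_ne_top, memLp_one_iff_integrable]
    have h : (fun x => ‖g x‖ ^ (ENNReal.ofReal q').toReal) =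
        fun x => μ + nsq (D x) := by
      funext x
      rw [ENNReal.toReal_ofReal hq'pos.le, Real.norm_of_nonneg (hgnn x), hgq x]
    rw [h]
    exact (integrable_const μ).add hD2
  -- Hölder's inequality
  have holder := integral_mul_le_Lp_mul_Lq_of_nonneg hconj
    (Filter.Eventually.of_forall hfnn) (Filter.Eventually.of_forall hgnn) hmemf hmemg
  simp only [hfq, hgq, hfg] at holder
  -- compute ∫ (μ + |D|²)
  have hGint : ∫ x, (μ + nsq (D x)) ∂ν = μ * (volume Ω).toReal + ∫ x, nsq (D x) ∂ν := by
    rw [integral_add (integrable_const μ) hD2, integral_const, smul_eq_mul, hν,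
      measureReal_def, Measure.restrict_apply_univ, mul_comm]
  rw [hGint] at holder
  -- abbreviations
  set A := ∫ x, nsq (E x) * (μ + nsq (D x)) ^ ((p - 2) / 2) ∂ν with hAdef
  set B := ∫ x, Real.sqrt (nsq (E x)) ^ (4 / (4 - p)) ∂ν with hBdef
  set C := μ * (volume Ω).toReal + ∫ x, nsq (D x) ∂ν with hCdef
  have hAnn : 0 ≤ A := integral_nonneg fun x => mul_nonneg (hFnn x) (hwpos x).le
  have hBnn : 0 ≤ B := integral_nonneg fun x => Real.rpow_nonneg (Real.sqrt_nonneg _) _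
  have hDint : 0 ≤ ∫ x, nsq (D x) ∂ν := integral_nonneg hDnn
  have hCnn : 0 ≤ C := add_nonneg (mul_nonneg hμ.le ENNReal.toReal_nonneg) hDint
  rcases hCnn.eq_or_lt with hC0 | hCpos
  · -- degenerate case: C = 0
    rw [ge_iff_le, ← hC0, Real.zero_rpow (by positivity : (2 - p) / 2 ≠ 0), div_zero]
    exact hAnn
  · -- main case
    rw [ge_iff_le, div_le_iff₀ (Real.rpow_pos_of_pos hCpos _)]
    calc B ^ q ≤ (A ^ (1 / q) * C ^ (1 / q')) ^ q :=
          Real.rpow_le_rpow hBnn holder hqpos.le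
      _ = A * C ^ ((2 - p) / 2) := by
          rw [Real.mul_rpow (Real.rpow_nonneg hAnn _) (Real.rpow_nonneg hCnn _),
            ← Real.rpow_mul hAnn, ← Real.rpow_mul hCnn,
            show 1 / q * q = 1 by field_simp, Real.rpow_one,
            show 1 / q' * q = (2 - p) / 2 by rw [hqdef, hq'def]; field_simp]
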